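/- Assume conditions (K), (A1) and (A2) hold. For x ∈ Ω, u ∈ B and n ≥ 1, set 𝓛_n(p_n, x, u) = [ (fC)(x−h_n u) Γ(α(x−h_n u)+1) / ( (fC)(x) Γ(α(x)+1) ) ] · exp[ p_n Δ_n^g(x,u)/g(x) − log(p_n) Δ_n^α(x,u) ] and Λ_n(p_n, x) = M_n(p_n, x) / ( f(x) C(x) g^{p_n}(x) ). If p_n → ∞ and p_n h_n^{η_g} → 0, then (i) sup_{x∈Ω} | Λ_n(p_n, x) / ( α(x) b(p_n+1, α(x)) ) − 1 | → 0 as n → ∞, and (ii) sup_{x∈Ω} | Λ_n(p_n, x) / ( α(x) b(p_n+1, α(x)) ) − ∫_B 𝓛_n(p_n, x, u) K(u) du | = O( h_n^{η_g} ∨ p_n^{−1} h_n^{η_α} ). -/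

import Mathlib

open MeasureTheory Filter Set Metric ProbabilityTheory

noncomputable section

/-- The Beta function `b(x,y) = ∫_0^1 t^{x-1} (1-t)^{y-1} dt`. -/
def betaFn (x y : ℝ) : ℝ := ∫ t in (0:ℝ)..1, t ^ (x - 1) * (1 - t) ^ (y - 1)

lemma betaFn_eq_Gamma {u v : ℝ} (hu : 0 < u) (hv : 0 < v) :
    betaFn u v = Real.Gamma u * Real.Gamma v / Real.Gamma (u + v) := by
  have key := Complex.Gamma_mul_Gamma_eq_betaIntegral (s := (u:ℂ)) (t := (v:ℂ))
    (by simpa using hu) (by simpa using hv)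
  have hbeta : Complex.betaIntegral (u:ℂ) (v:ℂ) = ((betaFn u v : ℝ) : ℂ) := by
    rw [Complex.betaIntegral, betaFn]
    rw [← intervalIntegral.integral_ofReal]
    apply intervalIntegral.integral_congr
    intro x hx
    rw [Set.uIcc_of_le (by norm_num : (0:ℝ) ≤ 1)] at hx
    have hx0 : 0 ≤ x := hx.1
    have hx1 : 0 ≤ 1 - x := by linarith [hx.2]
    push_cast
    rw [Complex.ofReal_cpow hx0, Complex.ofReal_cpow hx1]
    push_cast
    ring
  rw [hbeta, ← Complex.ofReal_add, Complex.Gamma_ofReal, Complex.Gamma_ofReal,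
    Complex.Gamma_ofReal] at key
  have : (Real.Gamma u * Real.Gamma v : ℝ) = Real.Gamma (u + v) * betaFn u v := by
    exact_mod_cast key
  have hG : Real.Gamma (u + v) ≠ 0 := (Real.Gamma_pos_of_pos (by linarith)).ne'
  field_simp
  linarith [this]

lemma holder_continuousOn {n : ℕ} {E : Set (Fin n → ℝ)} {γ : (Fin n → ℝ) → ℝ} {c η : ℝ}
    (hη : 0 < η) (hc : ∀ x ∈ E, ∀ y ∈ E, |γ x - γ y| ≤ c * ‖x - y‖ ^ η) :
    ContinuousOn γ E := by
  intro x hx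
  have h1 : Tendsto (fun y => c * ‖y - x‖ ^ η) (nhdsWithin x E) (nhds 0) := by
    have h2 : Tendsto (fun y : Fin n → ℝ => ‖y - x‖) (nhdsWithin x E) (nhds 0) := by
      have h0 : Tendsto (fun y : Fin n → ℝ => ‖y - x‖) (nhds x) (nhds ‖x - x‖) :=
        ((continuous_id.sub continuous_const).norm).tendsto x
      simp only [sub_self, norm_zero] at h0
      exact h0.mono_left nhdsWithin_le_nhds
    have h3 : ContinuousAt (fun t : ℝ => c * t ^ η) 0 := by
      exact (continuousAt_const.mul (Real.continuousAt_rpow_const 0 η (Or.inr hη.le)))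
    have := h3.tendsto.comp h2
    simpa [Function.comp_def, Real.zero_rpow hη.ne'] using this
  have key : Tendsto (fun y => |γ y - γ x|) (nhdsWithin x E) (nhds 0) := by
    apply squeeze_zero' (Eventually.of_forall fun y => abs_nonneg _)
    · filter_upwards [self_mem_nhdsWithin] with y hy
      exact hc y hy x hx
    · exact h1
  rw [ContinuousWithinAt, tendsto_iff_dist_tendsto_zero]
  simpa [Real.dist_eq] using key

lemma logGamma_chord {z1 z2 : ℝ} (h1 : 1 < z1) (h12 : z1 ≤ z2) :
    (z2 - z1) * Real.log (z1 - 1) ≤ Real.log (Real.Gamma z2) - Real.log (Real.Gamma z1) ∧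
    Real.log (Real.Gamma z2) - Real.log (Real.Gamma z1) ≤ (z2 - z1) * Real.log z2 := by
  rcases eq_or_lt_of_le h12 with rfl | hlt
  · simp
  have hstep : ∀ w : ℝ, 0 < w → Real.log (Real.Gamma (w + 1)) - Real.log (Real.Gamma w)
      = Real.log w := by
    intro w hw
    rw [Real.Gamma_add_one hw.ne', Real.log_mul hw.ne' (Real.Gamma_pos_of_pos hw).ne']
    ring
  have hz1 : (0:ℝ) < z1 := by linarith
  have hz2 : (0:ℝ) < z2 := by linarith
  constructor
  · have := Real.convexOn_log_Gamma.slope_mono_adjacent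
      (x := z1 - 1) (y := z1) (z := z2)
      (by simp [Set.mem_Ioi]; linarith) (by simp [Set.mem_Ioi]; linarith)
      (by linarith) hlt
    have hs : (Real.log ∘ Real.Gamma) z1 - (Real.log ∘ Real.Gamma) (z1 - 1) =
        Real.log (z1 - 1) := by
      have := hstep (z1 - 1) (by linarith)
      simpa [sub_add_cancel] using this
    rw [show z1 - (z1 - 1) = 1 by ring, div_one, hs] at this
    have h2 : 0 < z2 - z1 := by linarith
    rw [le_div_iff₀ h2] at this
    simpa [Function.comp, mul_comm] using this
  · have := Real.convexOn_log_Gamma.slope_mono_adjacent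
      (x := z1) (y := z2) (z := z2 + 1)
      (by simp [Set.mem_Ioi]; linarith) (by simp [Set.mem_Ioi]; linarith)
      hlt (by linarith)
    have hs : (Real.log ∘ Real.Gamma) (z2 + 1) - (Real.log ∘ Real.Gamma) z2 =
        Real.log z2 := hstep z2 hz2
    rw [show z2 + 1 - z2 = 1 by ring, div_one, hs] at this
    have h2 : 0 < z2 - z1 := by linarith
    rw [div_le_iff₀ h2] at this
    simpa [Function.comp, mul_comm] using this

lemma log_one_add_sub_self {t : ℝ} (ht : |t| ≤ 1/2) : |Real.log (1 + t) - t| ≤ 2 * t ^ 2 := by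
  have h1 : (0:ℝ) < 1 + t := by
    rcases abs_le.1 ht with ⟨h, _⟩; linarith
  have hup : Real.log (1 + t) ≤ t := by
    have := Real.log_le_sub_one_of_pos h1; linarith
  have hlow : t / (1 + t) ≤ Real.log (1 + t) := by
    have h2 : (0:ℝ) < (1 + t)⁻¹ := by positivity
    have := Real.log_le_sub_one_of_pos h2
    rw [Real.log_inv] at this
    have h3 : (1 + t)⁻¹ - 1 = -t / (1+t) := by field_simp; ring
    rw [h3] at this
    have : -(-t / (1+t)) ≤ Real.log (1 + t) := by linarith
    calc t / (1+t) = -(-t/(1+t)) := by ring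
    _ ≤ _ := this
  have habs : |Real.log (1 + t) - t| = t - Real.log (1 + t) := by
    rw [abs_sub_comm, abs_of_nonneg]; linarith
  rw [habs]
  have key : t - t / (1 + t) ≤ 2 * t ^ 2 := by
    have heq : t - t / (1 + t) = t ^ 2 / (1 + t) := by
      field_simp; ring
    rw [heq, div_le_iff₀ h1]
    rcases abs_le.1 ht with ⟨ha, hb⟩
    nlinarith [sq_nonneg t]
  have : t - Real.log (1+t) ≤ t - t / (1+t) := by linarith
  linarith

lemma exp_diff_bound {a b c : ℝ} (ha : a ≤ c) (hb : b ≤ c) (hab : |a - b| ≤ 1) :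
    |Real.exp a - Real.exp b| ≤ 2 * Real.exp c * |a - b| := by
  have key : Real.exp a - Real.exp b = Real.exp b * (Real.exp (a - b) - 1) := by
    rw [mul_sub, ← Real.exp_add]; ring_nf
  rw [key, abs_mul, abs_of_pos (Real.exp_pos b)]
  calc Real.exp b * |Real.exp (a-b) - 1| ≤ Real.exp c * (2 * |a - b|) :=
        mul_le_mul (Real.exp_le_exp.2 hb) (Real.abs_exp_sub_one_le hab)
          (abs_nonneg _) (Real.exp_pos c).le
  _ = 2 * Real.exp c * |a - b| := by ring

lemma tendsto_log_mul_rpow_neg {q : ℝ} (hq : 0 < q) :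
    Tendsto (fun x : ℝ => Real.log x * x ^ (-q)) atTop (nhds 0) := by
  have h := (isLittleO_log_rpow_atTop hq).tendsto_div_nhds_zero
  apply h.congr'
  filter_upwards [eventually_gt_atTop (0:ℝ)] with x hx
  rw [div_eq_mul_inv, ← Real.rpow_neg hx.le]

lemma setIntegral_K_eq_one {n : ℕ} {K : (Fin n → ℝ) → ℝ}
    (hKsupp : Function.support K ⊆ closedBall (0 : Fin n → ℝ) 1)
    (hKint : ∫ u, K u = 1) :
    ∫ u in closedBall (0 : Fin n → ℝ) 1, K u = 1 := by
  rw [← MeasureTheory.integral_indicator (measurableSet_closedBall),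
    Set.indicator_eq_self.2 hKsupp, hKint]

lemma continuousOn_comp_interior {n : ℕ} {E : Set (Fin n → ℝ)} {φ : (Fin n → ℝ) → ℝ}
    {m : (Fin n → ℝ) → (Fin n → ℝ)} {s : Set (Fin n → ℝ)}
    (hφ : ContinuousOn φ E) (hm : Continuous m) (hms : ∀ u ∈ s, m u ∈ interior E) :
    ContinuousOn (fun u => φ (m u)) s := by
  intro u hu
  have h1 : ContinuousAt φ (m u) :=
    hφ.continuousAt (mem_interior_iff_mem_nhds.1 (hms u hu))
  exact (h1.comp hm.continuousAt).continuousWithinAt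

lemma logGamma_ratio_oneside {P ax ay a2 : ℝ} (hP : 1 ≤ P) (hay : 0 < ay)
    (hyx : ay ≤ ax) (hax2 : ax ≤ a2) :
    0 ≤ (Real.log (Real.Gamma (P + ax + 1)) - Real.log (Real.Gamma (P + ay + 1)))
        - (ax - ay) * Real.log P ∧
    (Real.log (Real.Gamma (P + ax + 1)) - Real.log (Real.Gamma (P + ay + 1)))
        - (ax - ay) * Real.log P ≤ (ax - ay) * ((a2 + 1) / P) := by
  have hP0 : (0:ℝ) < P := by linarith
  have hax : (0:ℝ) < ax := lt_of_lt_of_le hay hyx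
  have h1 : 1 < P + ay + 1 := by linarith
  have h12 : P + ay + 1 ≤ P + ax + 1 := by linarith
  obtain ⟨hlo, hhi⟩ := logGamma_chord h1 h12
  have hz : P + ax + 1 - (P + ay + 1) = ax - ay := by ring
  rw [hz] at hlo hhi
  have hsub : P + ay + 1 - 1 = P + ay := by ring
  rw [hsub] at hlo
  have hd : 0 ≤ ax - ay := by linarith
  constructor
  · have hlogmono : Real.log P ≤ Real.log (P + ay) :=
      Real.log_le_log hP0 (by linarith)
    have := mul_le_mul_of_nonneg_left hlogmono hd
    linarith
  · have hlog2 : Real.log (P + ax + 1) ≤ Real.log P + (a2 + 1) / P := by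
      have e1 : P + ax + 1 = P * (1 + (ax + 1) / P) := by field_simp; ring
      rw [e1, Real.log_mul hP0.ne' (by positivity)]
      have hq3 : Real.log (1 + (ax + 1) / P) ≤ (ax + 1) / P := by
        have := Real.log_le_sub_one_of_pos (show (0:ℝ) < 1 + (ax + 1) / P by positivity)
        linarith
      have hq4 : (ax + 1) / P ≤ (a2 + 1) / P := by gcongr
      linarith
    have h5 := mul_le_mul_of_nonneg_left hlog2 hd
    have h6 : (ax - ay) * (Real.log P + (a2 + 1) / P)
        = (ax - ay) * Real.log P + (ax - ay) * ((a2 + 1) / P) := by ring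
    linarith

lemma logGamma_ratio_bound {P ax ay a2 : ℝ} (hP : 1 ≤ P) (hax : 0 < ax) (hay : 0 < ay)
    (hax2 : ax ≤ a2) (hay2 : ay ≤ a2) :
    |(Real.log (Real.Gamma (P + ax + 1)) - Real.log (Real.Gamma (P + ay + 1)))
      - (ax - ay) * Real.log P| ≤ |ax - ay| * ((a2 + 1) / P) := by
  have hP0 : (0:ℝ) < P := by linarith
  rcases le_total ay ax with hyx | hxy
  · obtain ⟨h1, h2⟩ := logGamma_ratio_oneside hP hay hyx hax2
    rw [abs_of_nonneg h1, abs_of_nonneg (by linarith : (0:ℝ) ≤ ax - ay)]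
    exact h2
  · obtain ⟨h1, h2⟩ := logGamma_ratio_oneside hP hax hxy hay2
    rw [show (Real.log (Real.Gamma (P + ax + 1)) - Real.log (Real.Gamma (P + ay + 1)))
      - (ax - ay) * Real.log P = -((Real.log (Real.Gamma (P + ay + 1))
        - Real.log (Real.Gamma (P + ax + 1))) - (ay - ax) * Real.log P) by ring,
      abs_neg, abs_of_nonneg h1, abs_sub_comm,
      abs_of_nonneg (by linarith : (0:ℝ) ≤ ay - ax)]
    exact h2


lemma mul_exp_near_one {Q r q rr : ℝ} (hQ : |Q - 1| ≤ q) (hr : |r| ≤ rr) (hrr : rr ≤ 1) :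
    |Q * Real.exp r - 1| ≤ q * Real.exp 1 + 2 * rr := by
  have hq0 : 0 ≤ q := le_trans (abs_nonneg _) hQ
  have h1 : Q * Real.exp r - 1 = (Q - 1) * Real.exp r + (Real.exp r - 1) := by ring
  have h2 : Real.exp r ≤ Real.exp 1 :=
    Real.exp_le_exp.2 (le_trans (le_abs_self r) (hr.trans hrr))
  have h3 : |Real.exp r - 1| ≤ 2 * |r| := Real.abs_exp_sub_one_le (hr.trans hrr)
  calc |Q * Real.exp r - 1| ≤ |(Q - 1) * Real.exp r| + |Real.exp r - 1| := by
        rw [h1]; exact abs_add_le _ _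
  _ = |Q - 1| * Real.exp r + |Real.exp r - 1| := by
        rw [abs_mul, abs_of_pos (Real.exp_pos r)]
  _ ≤ q * Real.exp 1 + 2 * rr := by
        have := mul_le_mul hQ h2 (Real.exp_pos r).le hq0
        have h4 : 2 * |r| ≤ 2 * rr := by linarith [hr]
        linarith [h3]

def F1x (d : ℕ) (f C g α : (Fin d → ℝ) → ℝ) (P hh : ℝ) (x u : Fin d → ℝ) : ℝ :=
  f (x - hh • u) * C (x - hh • u) * Real.Gamma (α (x - hh • u) + 1) /
    (f x * C x * Real.Gamma (α x + 1)) *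
  ((g (x - hh • u) / g x) ^ P *
    (Real.Gamma (P + α x + 1) / Real.Gamma (P + α (x - hh • u) + 1)))

def F2x (d : ℕ) (f C g α : (Fin d → ℝ) → ℝ) (P hh : ℝ) (x u : Fin d → ℝ) : ℝ :=
  f (x - hh • u) * C (x - hh • u) * Real.Gamma (α (x - hh • u) + 1) /
    (f x * C x * Real.Gamma (α x + 1)) *
  Real.exp (P * ((g (x - hh • u) - g x) / g x) -
    Real.log P * (α (x - hh • u) - α x))

lemma integrand_eq (d : ℕ) (f C g α K : (Fin d → ℝ) → ℝ) (P hh : ℝ) (x u : Fin d → ℝ)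
    (hP0 : 0 < P) (hfx : 0 < f x) (hCx : 0 < C x) (hgx : 0 < g x)
    (hgy : 0 < g (x - hh • u)) (hαx : 0 < α x) (hαy : 0 < α (x - hh • u)) :
    f (x - hh • u) * C (x - hh • u) * g (x - hh • u) ^ P * P *
        betaFn P (α (x - hh • u) + 1) * K u /
      (f x * C x * g x ^ P * (α x * betaFn (P + 1) (α x)))
    = F1x d f C g α P hh x u * K u := by
  have hβ1 : betaFn P (α (x - hh • u) + 1) =
      Real.Gamma P * Real.Gamma (α (x - hh • u) + 1) / Real.Gamma (P + α (x - hh • u) + 1) := by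
    rw [betaFn_eq_Gamma hP0 (by linarith),
      show P + (α (x - hh • u) + 1) = P + α (x - hh • u) + 1 from by ring]
  have hβ2 : betaFn (P + 1) (α x) =
      P * Real.Gamma P * Real.Gamma (α x) / Real.Gamma (P + α x + 1) := by
    rw [betaFn_eq_Gamma (by linarith) hαx, Real.Gamma_add_one hP0.ne',
      show P + 1 + α x = P + α x + 1 from by ring]
  have hΓx1 : Real.Gamma (α x + 1) = α x * Real.Gamma (α x) := Real.Gamma_add_one hαx.ne'
  have hdiv : (g (x - hh • u) / g x) ^ P = g (x - hh • u) ^ P / g x ^ P :=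
    Real.div_rpow hgy.le hgx.le P
  have hgxP : (0:ℝ) < g x ^ P := Real.rpow_pos_of_pos hgx P
  have hgyP : (0:ℝ) < g (x - hh • u) ^ P := Real.rpow_pos_of_pos hgy P
  have hΓP : 0 < Real.Gamma P := Real.Gamma_pos_of_pos hP0
  have hΓαx : 0 < Real.Gamma (α x) := Real.Gamma_pos_of_pos hαx
  have hΓ1 : 0 < Real.Gamma (P + α x + 1) := Real.Gamma_pos_of_pos (by linarith)
  have hΓ2 : 0 < Real.Gamma (P + α (x - hh • u) + 1) := Real.Gamma_pos_of_pos (by linarith)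
  have hΓy1 : 0 < Real.Gamma (α (x - hh • u) + 1) := Real.Gamma_pos_of_pos (by linarith)
  simp only [F1x]
  rw [hβ1, hβ2, hΓx1, hdiv]
  field_simp

lemma abs_sub_le' (a b : ℝ) : |a - b| ≤ |a| + |b| := by
  rw [sub_eq_add_neg]
  exact (abs_add_le _ _).trans (by rw [abs_neg])

set_option maxHeartbeats 1000000 in
lemma pointwise_bound (d : ℕ) (f C g α : (Fin d → ℝ) → ℝ) (P hh : ℝ) (x u : Fin d → ℝ)
    (g1 a2 Φ1 Φ2 cg cα ηg ηα e : ℝ)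
    (hP1 : 1 ≤ P) (hh0 : 0 ≤ hh)
    (hfx : 0 < f x) (hCx : 0 < C x)
    (hfy : 0 < f (x - hh • u)) (hCy : 0 < C (x - hh • u))
    (hg10 : 0 < g1) (hgx : g1 ≤ g x) (hgy : g1 ≤ g (x - hh • u))
    (hαx0 : 0 < α x) (hαy0 : 0 < α (x - hh • u))
    (hαx2 : α x ≤ a2) (hαy2 : α (x - hh • u) ≤ a2)
    (hΦ10 : 0 < Φ1)
    (hΦx : Φ1 ≤ f x * C x * Real.Gamma (α x + 1))
    (hΦy : f (x - hh • u) * C (x - hh • u) * Real.Gamma (α (x - hh • u) + 1) ≤ Φ2)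
    (hgdiff : |g x - g (x - hh • u)| ≤ cg * hh ^ ηg)
    (hαdiff : |α x - α (x - hh • u)| ≤ cα * hh ^ ηα)
    (hcg0 : 0 < cg) (hcα0 : 0 < cα)
    (hE3 : cg / g1 * (P * hh ^ ηg) ≤ 1/2)
    (hE4 : cα * (Real.log P * hh ^ ηα) ≤ 1/2)
    (hE5 : (a2 + 1) * cα * (P⁻¹ * hh ^ ηα) ≤ 1/2)
    (he1 : hh ^ ηg ≤ e) (he2 : P⁻¹ * hh ^ ηα ≤ e) :
    |F1x d f C g α P hh x u - F2x d f C g α P hh x u| ≤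
      Φ2 / Φ1 * (2 * Real.exp 2) * (cg / g1 + (a2 + 1) * cα) * e := by
  have hP0 : (0:ℝ) < P := by linarith
  have hgx0 : 0 < g x := lt_of_lt_of_le hg10 hgx
  have hgy0 : 0 < g (x - hh • u) := lt_of_lt_of_le hg10 hgy
  have ha20 : 0 < a2 := lt_of_lt_of_le hαx0 hαx2
  have hhh : 0 ≤ hh ^ ηg := Real.rpow_nonneg hh0 ηg
  have hhα : 0 ≤ hh ^ ηα := Real.rpow_nonneg hh0 ηα
  have hΓx1 : 0 < Real.Gamma (α x + 1) := Real.Gamma_pos_of_pos (by linarith)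
  have hΓy1 : 0 < Real.Gamma (α (x - hh • u) + 1) := Real.Gamma_pos_of_pos (by linarith)
  have hΓzx : 0 < Real.Gamma (P + α x + 1) := Real.Gamma_pos_of_pos (by linarith)
  have hΓzy : 0 < Real.Gamma (P + α (x - hh • u) + 1) := Real.Gamma_pos_of_pos (by linarith)
  have hΦx0 : 0 < f x * C x * Real.Gamma (α x + 1) := by positivity
  have hΦy0 : 0 < f (x - hh • u) * C (x - hh • u) * Real.Gamma (α (x - hh • u) + 1) := by
    positivity
  have hΦ20 : 0 < Φ2 := lt_of_lt_of_le hΦy0 hΦy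
  have hcgg1 : 0 ≤ cg / g1 := by positivity
  set t := (g (x - hh • u) - g x) / g x with htdef
  have ht1 : |t| ≤ cg / g1 * hh ^ ηg := by
    rw [htdef, abs_div, abs_of_pos hgx0]
    have hnum : |g (x - hh • u) - g x| ≤ cg * hh ^ ηg := by
      rw [abs_sub_comm]; exact hgdiff
    calc |g (x - hh • u) - g x| / g x ≤ (cg * hh ^ ηg) / g x := by gcongr
    _ ≤ (cg * hh ^ ηg) / g1 := by gcongr
    _ = cg / g1 * hh ^ ηg := by ring
  have htP : P * |t| ≤ 1/2 := by
    calc P * |t| ≤ P * (cg / g1 * hh ^ ηg) := mul_le_mul_of_nonneg_left ht1 hP0.le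
    _ = cg / g1 * (P * hh ^ ηg) := by ring
    _ ≤ 1/2 := hE3
  have hthalf : |t| ≤ 1/2 := by
    have := le_mul_of_one_le_left (abs_nonneg t) hP1
    linarith
  have h1t : (0:ℝ) < 1 + t := by
    rcases abs_le.1 hthalf with ⟨hl, _⟩; linarith
  have hgt : g (x - hh • u) / g x = 1 + t := by rw [htdef]; field_simp; ring
  have hlogP0 : 0 ≤ Real.log P := Real.log_nonneg hP1
  set D := Real.log (Real.Gamma (P + α x + 1)) -
    Real.log (Real.Gamma (P + α (x - hh • u) + 1)) with hDdef
  set s := Real.log (1 + t) * P + D with hsdef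
  set r := P * t - Real.log P * (α (x - hh • u) - α x) with hrdef
  have hW1 : F1x d f C g α P hh x u =
      f (x - hh • u) * C (x - hh • u) * Real.Gamma (α (x - hh • u) + 1) /
        (f x * C x * Real.Gamma (α x + 1)) * Real.exp s := by
    simp only [F1x]
    congr 1
    rw [hsdef, Real.exp_add, hDdef, Real.exp_sub, Real.exp_log hΓzx, Real.exp_log hΓzy,
      hgt, Real.rpow_def_of_pos h1t]
  have hW2 : F2x d f C g α P hh x u =
      f (x - hh • u) * C (x - hh • u) * Real.Gamma (α (x - hh • u) + 1) /
        (f x * C x * Real.Gamma (α x + 1)) * Real.exp r := by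
    simp only [F2x, hrdef, htdef]
  have hlog1t : |Real.log (1 + t) - t| ≤ 2 * t ^ 2 := log_one_add_sub_self hthalf
  have hGR : |D - (α x - α (x - hh • u)) * Real.log P| ≤
      |α x - α (x - hh • u)| * ((a2 + 1) / P) :=
    logGamma_ratio_bound hP1 hαx0 hαy0 hαx2 hαy2
  have hsr_split : s - r = (Real.log (1 + t) - t) * P +
      (D - (α x - α (x - hh • u)) * Real.log P) := by
    rw [hsdef, hrdef]; ring
  have h2 : t ^ 2 ≤ (cg / g1 * hh ^ ηg) * |t| := by
    have h2a := mul_le_mul_of_nonneg_right ht1 (abs_nonneg t)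
    rw [pow_two, ← abs_mul_abs_self]
    exact h2a
  have hb1 : |(Real.log (1 + t) - t) * P| ≤ cg / g1 * hh ^ ηg := by
    rw [abs_mul, abs_of_pos hP0]
    calc |Real.log (1 + t) - t| * P ≤ (2 * t ^ 2) * P :=
          mul_le_mul_of_nonneg_right hlog1t hP0.le
    _ ≤ (2 * ((cg / g1 * hh ^ ηg) * |t|)) * P := by
          apply mul_le_mul_of_nonneg_right ?_ hP0.le
          linarith
    _ = 2 * (cg / g1 * hh ^ ηg) * (P * |t|) := by ring
    _ ≤ 2 * (cg / g1 * hh ^ ηg) * (1/2) := by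
          apply mul_le_mul_of_nonneg_left htP
          exact mul_nonneg (by norm_num) (mul_nonneg hcgg1 hhh)
    _ = cg / g1 * hh ^ ηg := by ring
  have hb2 : |D - (α x - α (x - hh • u)) * Real.log P| ≤
      (a2 + 1) * cα * (P⁻¹ * hh ^ ηα) := by
    calc |D - (α x - α (x - hh • u)) * Real.log P| ≤
        |α x - α (x - hh • u)| * ((a2 + 1) / P) := hGR
    _ ≤ (cα * hh ^ ηα) * ((a2 + 1) / P) := by
        apply mul_le_mul_of_nonneg_right hαdiff
        positivity
    _ = (a2 + 1) * cα * (P⁻¹ * hh ^ ηα) := by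
        field_simp
  have hsr : |s - r| ≤ cg / g1 * hh ^ ηg + (a2 + 1) * cα * (P⁻¹ * hh ^ ηα) := by
    rw [hsr_split]
    exact (abs_add_le _ _).trans (add_le_add hb1 hb2)
  have hgsmall : cg / g1 * hh ^ ηg ≤ 1/2 := by
    have h3a : hh ^ ηg ≤ P * hh ^ ηg := le_mul_of_one_le_left hhh hP1
    have h3b := mul_le_mul_of_nonneg_left h3a hcgg1
    linarith
  have hsr1 : |s - r| ≤ 1 := by linarith
  have hrabs : |r| ≤ 1 := by
    rw [hrdef]
    have e1 : |P * t| = P * |t| := by rw [abs_mul, abs_of_pos hP0]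
    have e3 : |α (x - hh • u) - α x| ≤ cα * hh ^ ηα := by
      rw [abs_sub_comm]; exact hαdiff
    have e2 : |Real.log P * (α (x - hh • u) - α x)| ≤ cα * (Real.log P * hh ^ ηα) := by
      rw [abs_mul, abs_of_nonneg hlogP0]
      calc Real.log P * |α (x - hh • u) - α x| ≤ Real.log P * (cα * hh ^ ηα) :=
            mul_le_mul_of_nonneg_left e3 hlogP0
      _ = cα * (Real.log P * hh ^ ηα) := by ring
    calc |P * t - Real.log P * (α (x - hh • u) - α x)| ≤
        |P * t| + |Real.log P * (α (x - hh • u) - α x)| := abs_sub_le' _ _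
    _ ≤ 1/2 + 1/2 := add_le_add (by rw [e1]; exact htP) (le_trans e2 hE4)
    _ = 1 := by norm_num
  have hs2 : s ≤ 2 := by
    have : s ≤ |s - r| + |r| := by
      calc s = (s - r) + r := by ring
      _ ≤ |s - r| + |r| := add_le_add (le_abs_self _) (le_abs_self _)
    linarith
  have hr2 : r ≤ 2 := le_trans (le_abs_self r) (by linarith)
  have hexp : |Real.exp s - Real.exp r| ≤ 2 * Real.exp 2 * |s - r| :=
    exp_diff_bound hs2 hr2 hsr1
  have he0 : 0 ≤ e := le_trans hhh he1
  have hQ1 : f (x - hh • u) * C (x - hh • u) * Real.Gamma (α (x - hh • u) + 1) /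
      (f x * C x * Real.Gamma (α x + 1)) ≤ Φ2 / Φ1 :=
    div_le_div₀ hΦ20.le hΦy hΦ10 hΦx
  have hQ0 : 0 ≤ f (x - hh • u) * C (x - hh • u) * Real.Gamma (α (x - hh • u) + 1) /
      (f x * C x * Real.Gamma (α x + 1)) := by positivity
  have hsre : |s - r| ≤ (cg / g1 + (a2 + 1) * cα) * e := by
    have q1 : cg / g1 * hh ^ ηg ≤ cg / g1 * e := mul_le_mul_of_nonneg_left he1 hcgg1
    have q2 : (a2 + 1) * cα * (P⁻¹ * hh ^ ηα) ≤ (a2 + 1) * cα * e :=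
      mul_le_mul_of_nonneg_left he2 (by positivity)
    calc |s - r| ≤ cg / g1 * hh ^ ηg + (a2 + 1) * cα * (P⁻¹ * hh ^ ηα) := hsr
    _ ≤ cg / g1 * e + (a2 + 1) * cα * e := add_le_add q1 q2
    _ = (cg / g1 + (a2 + 1) * cα) * e := by ring
  rw [hW1, hW2, ← mul_sub, abs_mul, abs_of_nonneg hQ0]
  calc f (x - hh • u) * C (x - hh • u) * Real.Gamma (α (x - hh • u) + 1) /
        (f x * C x * Real.Gamma (α x + 1)) * |Real.exp s - Real.exp r|
      ≤ Φ2 / Φ1 * (2 * Real.exp 2 * |s - r|) :=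
        mul_le_mul hQ1 hexp (abs_nonneg _) (by positivity)
  _ ≤ Φ2 / Φ1 * (2 * Real.exp 2 * ((cg / g1 + (a2 + 1) * cα) * e)) := by
        apply mul_le_mul_of_nonneg_left ?_ (by positivity)
        exact mul_le_mul_of_nonneg_left hsre (by positivity)
  _ = Φ2 / Φ1 * (2 * Real.exp 2) * (cg / g1 + (a2 + 1) * cα) * e := by ring


/-- `M_n(p,x) = ∫_B (fCg^p)(x - h u) · p · b(p, α(x - h u) + 1) K(u) du`. -/
def Mn (d : ℕ) (f C g α : (Fin d → ℝ) → ℝ) (K : (Fin d → ℝ) → ℝ) (hn : ℝ)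
    (q : ℝ) (x : Fin d → ℝ) : ℝ :=
  ∫ u in closedBall (0 : Fin d → ℝ) 1,
    f (x - hn • u) * C (x - hn • u) * g (x - hn • u) ^ q * q *
      betaFn q (α (x - hn • u) + 1) * K u

set_option maxHeartbeats 2000000 in
theorem uniform_expansion_Mn
    (d : ℕ) (hd : 0 < d)
    (E Ω : Set (Fin d → ℝ)) (hEclosed : IsClosed E)
    (hΩcomp : IsCompact Ω) (hΩE : Ω ⊆ interior E)
    (p h : ℕ → ℝ) (hppos : ∀ n, 0 < p n) (hhpos : ∀ n, 0 < h n)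
    (hptop : Tendsto p atTop atTop) (hh0 : Tendsto h atTop (nhds 0))
    (f g : (Fin d → ℝ) → ℝ) (ηg : ℝ) (hηg : 0 < ηg)
    (hfcont : ContinuousOn f E) (hfpos : ∀ x ∈ E, 0 < f x)
    (hgpos : ∀ x ∈ E, 0 < g x)
    (hgHolder : ∃ cg > 0, ∀ x ∈ E, ∀ y ∈ E, |g x - g y| ≤ cg * ‖x - y‖ ^ ηg)
    (hph : Tendsto (fun n => p n * h n ^ ηg) atTop (nhds 0))
    (α C : (Fin d → ℝ) → ℝ) (ηα : ℝ) (hηα : 0 < ηα)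
    (hαpos : ∀ x ∈ E, 0 < α x)
    (hαHolder : ∃ cα > 0, ∀ x ∈ E, ∀ y ∈ E, |α x - α y| ≤ cα * ‖x - y‖ ^ ηα)
    (hCpos : ∀ x ∈ E, 0 < C x) (hCcont : ContinuousOn C E)
    (K : (Fin d → ℝ) → ℝ)
    (hKnn : ∀ u, 0 ≤ K u) (hKint : ∫ u, K u = 1)
    (hKsupp : Function.support K ⊆ closedBall (0 : Fin d → ℝ) 1)
    (ηK : ℝ) (hηK : 0 < ηK)
    (hKHolder : ∃ cK > 0, ∀ u v, |K u - K v| ≤ cK * ‖u - v‖ ^ ηK)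
    :
    Tendsto (fun n => ⨆ x : Ω,
      |Mn d f C g α K (h n) (p n) (x : Fin d → ℝ) /
          (f (x : Fin d → ℝ) * C (x : Fin d → ℝ) * g (x : Fin d → ℝ) ^ p n) /
        (α (x : Fin d → ℝ) * betaFn (p n + 1) (α (x : Fin d → ℝ))) - 1|) atTop (nhds 0) ∧
    ∃ M : ℝ, ∀ᶠ n in atTop,
      ⨆ x : Ω,
        |Mn d f C g α K (h n) (p n) (x : Fin d → ℝ) /
            (f (x : Fin d → ℝ) * C (x : Fin d → ℝ) * g (x : Fin d → ℝ) ^ p n) /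
          (α (x : Fin d → ℝ) * betaFn (p n + 1) (α (x : Fin d → ℝ))) -
         ∫ u in closedBall (0 : Fin d → ℝ) 1,
           (f ((x : Fin d → ℝ) - h n • u) * C ((x : Fin d → ℝ) - h n • u) *
               Real.Gamma (α ((x : Fin d → ℝ) - h n • u) + 1) /
             (f (x : Fin d → ℝ) * C (x : Fin d → ℝ) * Real.Gamma (α (x : Fin d → ℝ) + 1))) *
           Real.exp (p n * ((g ((x : Fin d → ℝ) - h n • u) - g (x : Fin d → ℝ)) / g (x : Fin d → ℝ)) -
             Real.log (p n) * (α ((x : Fin d → ℝ) - h n • u) - α (x : Fin d → ℝ))) * K u| ≤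
      M * max (h n ^ ηg) ((p n)⁻¹ * h n ^ ηα) := by
  obtain ⟨cg, hcg0, hgH⟩ := hgHolder
  obtain ⟨cα, hcα0, hαH⟩ := hαHolder
  obtain ⟨cK, hcK0, hKH⟩ := hKHolder
  have hKcont : Continuous K := by
    have := holder_continuousOn (E := (univ : Set (Fin d → ℝ))) hηK (fun u _ v _ => hKH u v)
    exact continuousOn_univ.mp this
  rcases Ω.eq_empty_or_nonempty with rfl | hne
  · haveI : IsEmpty ((∅ : Set (Fin d → ℝ)) : Type _) := ⟨fun x => Set.notMem_empty _ x.2⟩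
    have hzero : ∀ fn : ((∅ : Set (Fin d → ℝ)) : Type _) → ℝ, (⨆ x, fn x) = 0 := fun fn => by
      rw [show (⨆ x, fn x) = sSup (Set.range fn) from rfl, Set.range_eq_empty fn]
      exact Real.sSup_empty
    constructor
    · simp only [hzero]
      exact tendsto_const_nhds
    · refine ⟨0, Eventually.of_forall fun n => ?_⟩
      rw [hzero, zero_mul]
  -- thickening setup
  obtain ⟨δ, hδ0, hδ⟩ := hΩcomp.exists_cthickening_subset_open isOpen_interior hΩE
  set Ω' := cthickening δ Ω with hΩ'def
  have hΩ'comp : IsCompact Ω' := hΩcomp.cthickening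
  have hΩ'int : Ω' ⊆ interior E := hδ
  have hΩ'E : Ω' ⊆ E := hδ.trans interior_subset
  have hΩΩ' : Ω ⊆ Ω' := self_subset_cthickening Ω
  have hΩ'ne : Ω'.Nonempty := hne.mono hΩΩ'
  have hgcont : ContinuousOn g E := holder_continuousOn hηg hgH
  have hαcont : ContinuousOn α E := holder_continuousOn hηα hαH
  have hGammaAt : ∀ z : ℝ, 0 < z → ContinuousAt Real.Gamma z := by
    intro z hz
    refine (Real.differentiableAt_Gamma fun m => ?_).continuousAt
    have : -(m:ℝ) ≤ 0 := neg_nonpos.mpr (Nat.cast_nonneg m)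
    exact (lt_of_le_of_lt this hz).ne'
  set Φ : (Fin d → ℝ) → ℝ := fun y => f y * C y * Real.Gamma (α y + 1) with hΦdef
  have hΦcont : ContinuousOn Φ E := by
    refine (hfcont.mul hCcont).mul ?_
    intro y hy
    exact ContinuousAt.comp_continuousWithinAt (g := Real.Gamma)
      (hGammaAt (α y + 1) (by linarith [hαpos y hy]))
      ((hαcont y hy).add continuousWithinAt_const)
  have hΦpos : ∀ y ∈ E, 0 < Φ y := fun y hy => by
    have := hfpos y hy; have := hCpos y hy
    have := Real.Gamma_pos_of_pos (show (0:ℝ) < α y + 1 by linarith [hαpos y hy])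
    positivity
  -- extrema
  obtain ⟨xg, hxg, hxgmin⟩ := hΩ'comp.exists_isMinOn hΩ'ne (hgcont.mono hΩ'E)
  set g1 := g xg with hg1def
  have hg10 : 0 < g1 := hgpos _ (hΩ'E hxg)
  have hg1le : ∀ y ∈ Ω', g1 ≤ g y := fun y hy => hxgmin hy
  obtain ⟨xa1, hxa1, hxa1min⟩ := hΩ'comp.exists_isMinOn hΩ'ne (hαcont.mono hΩ'E)
  obtain ⟨xa2, hxa2, hxa2max⟩ := hΩ'comp.exists_isMaxOn hΩ'ne (hαcont.mono hΩ'E)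
  set a1 := α xa1 with ha1def
  set a2 := α xa2 with ha2def
  have ha10 : 0 < a1 := hαpos _ (hΩ'E hxa1)
  have ha1le : ∀ y ∈ Ω', a1 ≤ α y := fun y hy => hxa1min hy
  have ha2ge : ∀ y ∈ Ω', α y ≤ a2 := fun y hy => hxa2max hy
  obtain ⟨xp1, hxp1, hxp1min⟩ := hΩ'comp.exists_isMinOn hΩ'ne (hΦcont.mono hΩ'E)
  obtain ⟨xp2, hxp2, hxp2max⟩ := hΩ'comp.exists_isMaxOn hΩ'ne (hΦcont.mono hΩ'E)
  set Φ1 := Φ xp1 with hΦ1def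
  set Φ2 := Φ xp2 with hΦ2def
  have hΦ10 : 0 < Φ1 := hΦpos _ (hΩ'E hxp1)
  have hΦ1le : ∀ y ∈ Ω', Φ1 ≤ Φ y := fun y hy => hxp1min hy
  have hΦ2ge : ∀ y ∈ Ω', Φ y ≤ Φ2 := fun y hy => hxp2max hy
  have hΦ20 : 0 < Φ2 := lt_of_lt_of_le hΦ10 (hΦ1le _ hxp2)
  -- sequences
  set En : ℕ → ℝ := fun n => max (h n ^ ηg) ((p n)⁻¹ * h n ^ ηα) with hEndef
  have hEnpos : ∀ n, 0 < En n := fun n =>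
    lt_of_lt_of_le (Real.rpow_pos_of_pos (hhpos n) ηg) (le_max_left _ _)
  have ht1 : Tendsto (fun n => h n ^ ηg) atTop (nhds 0) := by
      apply squeeze_zero' (Eventually.of_forall fun n => (Real.rpow_pos_of_pos (hhpos n) ηg).le)
        ?_ hph
      filter_upwards [hptop.eventually_ge_atTop 1] with n hp1
      exact le_mul_of_one_le_left (Real.rpow_pos_of_pos (hhpos n) ηg).le hp1
  have ht2 : Tendsto (fun n => (p n)⁻¹ * h n ^ ηα) atTop (nhds 0) := by
      apply squeeze_zero' (Eventually.of_forall fun n =>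
        (mul_pos (inv_pos.mpr (hppos n)) (Real.rpow_pos_of_pos (hhpos n) ηα)).le)
        ?_ hptop.inv_tendsto_atTop
      filter_upwards [hh0.eventually_le_const (by norm_num : (0:ℝ) < 1)] with n hn1
      calc (p n)⁻¹ * h n ^ ηα ≤ (p n)⁻¹ * 1 := by
            refine mul_le_mul_of_nonneg_left ?_ (inv_pos.mpr (hppos n)).le
            exact Real.rpow_le_one (hhpos n).le hn1 hηα.le
      _ = (p n)⁻¹ := mul_one _
  have hEn0 : Tendsto En atTop (nhds 0) := by
    have := ht1.max ht2
    simpa using this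
  have hlogp : Tendsto (fun n => Real.log (p n) * h n ^ ηα) atTop (nhds 0) := by
    have hq : 0 < ηα / ηg := by positivity
    have h0 : ∀ᶠ n in atTop, 0 ≤ Real.log (p n) * h n ^ ηα := by
      filter_upwards [hptop.eventually_ge_atTop 1] with n hp1
      exact mul_nonneg (Real.log_nonneg hp1) (Real.rpow_pos_of_pos (hhpos n) ηα).le
    have hev : ∀ᶠ n in atTop, Real.log (p n) * h n ^ ηα ≤
        Real.log (p n) * (p n) ^ (-(ηα / ηg)) := by
      filter_upwards [hptop.eventually_ge_atTop 1,
        hph.eventually_le_const (by norm_num : (0:ℝ) < 1)] with n hp1 hph1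
      have hp0 : (0:ℝ) < p n := hppos n
      have hhg : h n ^ ηg ≤ (p n)⁻¹ := by
        rw [← one_div, le_div_iff₀ hp0]
        calc h n ^ ηg * p n = p n * h n ^ ηg := mul_comm _ _
        _ ≤ 1 := hph1
      have key : h n ^ ηα ≤ (p n) ^ (-(ηα / ηg)) := by
        have e1 : h n ^ ηα = (h n ^ ηg) ^ (ηα / ηg) := by
          rw [← Real.rpow_mul (hhpos n).le]
          congr 1
          field_simp
        calc h n ^ ηα = (h n ^ ηg) ^ (ηα / ηg) := e1
        _ ≤ ((p n)⁻¹) ^ (ηα / ηg) :=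
            Real.rpow_le_rpow (Real.rpow_pos_of_pos (hhpos n) ηg).le hhg hq.le
        _ = (p n) ^ (-(ηα / ηg)) := by
            rw [Real.inv_rpow hp0.le, ← Real.rpow_neg hp0.le]
      exact mul_le_mul_of_nonneg_left key (Real.log_nonneg hp1)
    have hlim : Tendsto (fun n => Real.log (p n) * (p n) ^ (-(ηα / ηg))) atTop (nhds 0) :=
      (tendsto_log_mul_rpow_neg hq).comp hptop
    exact squeeze_zero' h0 hev hlim
  -- constants
  have ha20 : 0 < a2 := lt_of_lt_of_le ha10 (ha1le _ hxa2)
  set Cc := cg / g1 + (a2 + 1) * cα with hCcdef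
  have hCc0 : 0 ≤ Cc :=
    add_nonneg (div_nonneg hcg0.le hg10.le) (mul_nonneg (by linarith) hcα0.le)
  set M0 := Φ2 / Φ1 * (2 * Real.exp 2) * Cc with hM0def
  have hM00 : 0 ≤ M0 :=
    mul_nonneg (mul_nonneg (div_nonneg hΦ20.le hΦ10.le)
      (by positivity)) hCc0
  -- membership
  have hnormb : ∀ n : ℕ, ∀ x : Fin d → ℝ, ∀ u ∈ closedBall (0 : Fin d → ℝ) 1,
      ‖x - (x - h n • u)‖ ≤ h n := by
    intro n x u hu
    have e1 : x - (x - h n • u) = h n • u := by abel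
    rw [e1, norm_smul, Real.norm_eq_abs, abs_of_pos (hhpos n)]
    calc h n * ‖u‖ ≤ h n * 1 :=
          mul_le_mul_of_nonneg_left (mem_closedBall_zero_iff.mp hu) (hhpos n).le
    _ = h n := mul_one _
  have hymem : ∀ n : ℕ, h n ≤ δ → ∀ x ∈ Ω, ∀ u ∈ closedBall (0 : Fin d → ℝ) 1,
      x - h n • u ∈ Ω' := by
    intro n hnδ x hx u hu
    apply mem_cthickening_of_dist_le (x - h n • u) x δ Ω hx
    rw [dist_eq_norm, show x - h n • u - x = -(x - (x - h n • u)) from by abel, norm_neg]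
    exact le_trans (hnormb n x u hu) hnδ
  -- tendsto facts for eventual bounds
  have hT3 : Tendsto (fun n => cg / g1 * (p n * h n ^ ηg)) atTop (nhds 0) := by
    simpa using hph.const_mul (cg / g1)
  have hT4 : Tendsto (fun n => cα * (Real.log (p n) * h n ^ ηα)) atTop (nhds 0) := by
    simpa using hlogp.const_mul cα
  have hT5 : Tendsto (fun n => (a2 + 1) * cα * ((p n)⁻¹ * h n ^ ηα)) atTop (nhds 0) := by
    simpa using ht2.const_mul ((a2 + 1) * cα)
  -- integrability of the two integrands
  have hIntAll : ∀ n : ℕ, h n ≤ δ → ∀ x ∈ Ω,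
      IntegrableOn (fun u => F1x d f C g α (p n) (h n) x u * K u)
        (closedBall (0 : Fin d → ℝ) 1) volume ∧
      IntegrableOn (fun u => F2x d f C g α (p n) (h n) x u * K u)
        (closedBall (0 : Fin d → ℝ) 1) volume := by
    intro n hnδ x hxΩ
    have hxΩ' : x ∈ Ω' := hΩΩ' hxΩ
    have hxE : x ∈ E := hΩ'E hxΩ'
    have hyΩ' : ∀ u ∈ closedBall (0 : Fin d → ℝ) 1, x - h n • u ∈ Ω' := hymem n hnδ x hxΩ
    have hyE : ∀ u ∈ closedBall (0 : Fin d → ℝ) 1, x - h n • u ∈ E :=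
      fun u hu => hΩ'E (hyΩ' u hu)
    have hyInt : ∀ u ∈ closedBall (0 : Fin d → ℝ) 1, x - h n • u ∈ interior E :=
      fun u hu => hΩ'int (hyΩ' u hu)
    have hmcont : Continuous (fun u : Fin d → ℝ => x - h n • u) :=
      continuous_const.sub (continuous_id.const_smul (h n))
    have hfY : ContinuousOn (fun u => f (x - h n • u)) (closedBall (0:Fin d → ℝ) 1) :=
      continuousOn_comp_interior hfcont hmcont hyInt
    have hCY : ContinuousOn (fun u => C (x - h n • u)) (closedBall (0:Fin d → ℝ) 1) :=
      continuousOn_comp_interior hCcont hmcont hyInt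
    have hgY : ContinuousOn (fun u => g (x - h n • u)) (closedBall (0:Fin d → ℝ) 1) :=
      continuousOn_comp_interior hgcont hmcont hyInt
    have hαY : ContinuousOn (fun u => α (x - h n • u)) (closedBall (0:Fin d → ℝ) 1) :=
      continuousOn_comp_interior hαcont hmcont hyInt
    have hΓY : ContinuousOn (fun u => Real.Gamma (α (x - h n • u) + 1))
        (closedBall (0:Fin d → ℝ) 1) := by
      intro u hu
      exact ContinuousAt.comp_continuousWithinAt (g := Real.Gamma)
        (hGammaAt _ (by linarith [hαpos _ (hyE u hu)]))
        ((hαY u hu).add continuousWithinAt_const)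
    have hΓY2 : ContinuousOn (fun u => Real.Gamma (p n + α (x - h n • u) + 1))
        (closedBall (0:Fin d → ℝ) 1) := by
      intro u hu
      exact ContinuousAt.comp_continuousWithinAt (g := Real.Gamma)
        (hGammaAt _ (by linarith [hαpos _ (hyE u hu), (hppos n)]))
        (((continuousWithinAt_const.add (hαY u hu))).add continuousWithinAt_const)
    have hnum : ContinuousOn (fun u =>
        f (x - h n • u) * C (x - h n • u) * Real.Gamma (α (x - h n • u) + 1) /
          (f x * C x * Real.Gamma (α x + 1))) (closedBall (0:Fin d → ℝ) 1) :=
      ((hfY.mul hCY).mul hΓY).div_const _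
    have hF1cont : ContinuousOn (fun u => F1x d f C g α (p n) (h n) x u)
        (closedBall (0:Fin d → ℝ) 1) := by
      simp only [F1x]
      apply hnum.mul
      apply ContinuousOn.mul
      · apply ContinuousOn.rpow_const (hgY.div_const _)
        intro u hu
        exact Or.inl (div_ne_zero (hgpos _ (hyE u hu)).ne' (hgpos _ hxE).ne')
      · apply ContinuousOn.div continuousOn_const hΓY2
        intro u hu
        exact (Real.Gamma_pos_of_pos
          (by linarith [hαpos _ (hyE u hu), hppos n] :
            (0:ℝ) < p n + α (x - h n • u) + 1)).ne'
    have hF2cont : ContinuousOn (fun u => F2x d f C g α (p n) (h n) x u)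
        (closedBall (0:Fin d → ℝ) 1) := by
      simp only [F2x]
      apply hnum.mul
      apply Real.continuous_exp.comp_continuousOn
      apply ContinuousOn.sub
      · exact continuousOn_const.mul ((hgY.sub continuousOn_const).div_const _)
      · exact continuousOn_const.mul (hαY.sub continuousOn_const)
    exact ⟨(hF1cont.mul hKcont.continuousOn).integrableOn_compact (isCompact_closedBall _ _),
      (hF2cont.mul hKcont.continuousOn).integrableOn_compact (isCompact_closedBall _ _)⟩
  have keyA : ∀ᶠ n in atTop, ∀ x ∈ Ω,
      |Mn d f C g α K (h n) (p n) x / (f x * C x * g x ^ p n) /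
          (α x * betaFn (p n + 1) (α x)) -
        ∫ u in closedBall (0 : Fin d → ℝ) 1,
          (f (x - h n • u) * C (x - h n • u) * Real.Gamma (α (x - h n • u) + 1) /
            (f x * C x * Real.Gamma (α x + 1))) *
          Real.exp (p n * ((g (x - h n • u) - g x) / g x) -
            Real.log (p n) * (α (x - h n • u) - α x)) * K u| ≤ M0 * En n := by
    have hEv1 : ∀ᶠ n in atTop, h n ≤ δ := hh0.eventually_le_const hδ0
    have hEv2 : ∀ᶠ n in atTop, 1 ≤ p n := hptop.eventually_ge_atTop 1
    have hEv3 : ∀ᶠ n in atTop, cg / g1 * (p n * h n ^ ηg) ≤ 1/2 :=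
      hT3.eventually_le_const (by norm_num)
    have hEv4 : ∀ᶠ n in atTop, cα * (Real.log (p n) * h n ^ ηα) ≤ 1/2 :=
      hT4.eventually_le_const (by norm_num)
    have hEv5 : ∀ᶠ n in atTop, (a2 + 1) * cα * ((p n)⁻¹ * h n ^ ηα) ≤ 1/2 :=
      hT5.eventually_le_const (by norm_num)
    filter_upwards [hEv1, hEv2, hEv3, hEv4, hEv5] with n hn1 hn2 hn3 hn4 hn5
    intro x hxΩ
    have hxΩ' : x ∈ Ω' := hΩΩ' hxΩ
    have hxE : x ∈ E := hΩ'E hxΩ'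
    have hfx := hfpos x hxE
    have hCx := hCpos x hxE
    have hαx0 := hαpos x hxE
    have hgx0 := hgpos x hxE
    have hP0 : 0 < p n := hppos n
    have hyΩ' : ∀ u ∈ closedBall (0 : Fin d → ℝ) 1, x - h n • u ∈ Ω' := hymem n hn1 x hxΩ
    have hyE : ∀ u ∈ closedBall (0 : Fin d → ℝ) 1, x - h n • u ∈ E :=
      fun u hu => hΩ'E (hyΩ' u hu)
    obtain ⟨hIntF1, hIntF2⟩ := hIntAll n hn1 x hxΩ
    have hIeq : Mn d f C g α K (h n) (p n) x / (f x * C x * g x ^ p n) /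
        (α x * betaFn (p n + 1) (α x)) =
        ∫ u in closedBall (0 : Fin d → ℝ) 1, F1x d f C g α (p n) (h n) x u * K u := by
      simp only [Mn]
      rw [div_div, ← MeasureTheory.integral_div]
      refine setIntegral_congr_fun measurableSet_closedBall fun u hu => ?_
      exact integrand_eq d f C g α K (p n) (h n) x u hP0 hfx hCx hgx0
        (hgpos _ (hyE u hu)) hαx0 (hαpos _ (hyE u hu))
    have hJeq : (∫ u in closedBall (0 : Fin d → ℝ) 1,
          (f (x - h n • u) * C (x - h n • u) * Real.Gamma (α (x - h n • u) + 1) /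
            (f x * C x * Real.Gamma (α x + 1))) *
          Real.exp (p n * ((g (x - h n • u) - g x) / g x) -
            Real.log (p n) * (α (x - h n • u) - α x)) * K u) =
        ∫ u in closedBall (0 : Fin d → ℝ) 1, F2x d f C g α (p n) (h n) x u * K u := rfl
    rw [hIeq, hJeq, ← MeasureTheory.integral_sub hIntF1 hIntF2]
    have hptb : ∀ u ∈ closedBall (0 : Fin d → ℝ) 1,
        |F1x d f C g α (p n) (h n) x u - F2x d f C g α (p n) (h n) x u| ≤ M0 * En n := by
      intro u hu
      have hyE' := hyE u hu
      have hyΩ'' := hyΩ' u hu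
      have hgdiff : |g x - g (x - h n • u)| ≤ cg * h n ^ ηg := by
        calc |g x - g (x - h n • u)| ≤ cg * ‖x - (x - h n • u)‖ ^ ηg := hgH x hxE _ hyE'
        _ ≤ cg * h n ^ ηg := by
            apply mul_le_mul_of_nonneg_left ?_ hcg0.le
            exact Real.rpow_le_rpow (norm_nonneg _) (hnormb n x u hu) hηg.le
      have hαdiff : |α x - α (x - h n • u)| ≤ cα * h n ^ ηα := by
        calc |α x - α (x - h n • u)| ≤ cα * ‖x - (x - h n • u)‖ ^ ηα := hαH x hxE _ hyE'
        _ ≤ cα * h n ^ ηα := by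
            apply mul_le_mul_of_nonneg_left ?_ hcα0.le
            exact Real.rpow_le_rpow (norm_nonneg _) (hnormb n x u hu) hηα.le
      have hbd := pointwise_bound d f C g α (p n) (h n) x u g1 a2 Φ1 Φ2 cg cα ηg ηα (En n)
        hn2 (hhpos n).le hfx hCx (hfpos _ hyE') (hCpos _ hyE') hg10 (hg1le x hxΩ')
        (hg1le _ hyΩ'') hαx0 (hαpos _ hyE') (ha2ge x hxΩ') (ha2ge _ hyΩ'') hΦ10
        (hΦ1le x hxΩ') (hΦ2ge _ hyΩ'') hgdiff hαdiff hcg0 hcα0 hn3 hn4 hn5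
        (le_max_left _ _) (le_max_right _ _)
      calc |F1x d f C g α (p n) (h n) x u - F2x d f C g α (p n) (h n) x u| ≤
          Φ2 / Φ1 * (2 * Real.exp 2) * (cg / g1 + (a2 + 1) * cα) * En n := hbd
      _ = M0 * En n := by rw [hM0def, hCcdef]
    rw [← Real.norm_eq_abs]
    refine (norm_integral_le_integral_norm _).trans ?_
    have hIntBnd : IntegrableOn (fun u => M0 * En n * K u)
        (closedBall (0 : Fin d → ℝ) 1) volume :=
      ((continuous_const.mul hKcont).continuousOn).integrableOn_compact (isCompact_closedBall _ _)
    have hmono : (∫ u in closedBall (0 : Fin d → ℝ) 1,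
        ‖F1x d f C g α (p n) (h n) x u * K u - F2x d f C g α (p n) (h n) x u * K u‖) ≤
        ∫ u in closedBall (0 : Fin d → ℝ) 1, M0 * En n * K u := by
      refine setIntegral_mono_on ((hIntF1.sub hIntF2).norm) hIntBnd measurableSet_closedBall ?_
      intro u hu
      rw [show F1x d f C g α (p n) (h n) x u * K u - F2x d f C g α (p n) (h n) x u * K u =
        (F1x d f C g α (p n) (h n) x u - F2x d f C g α (p n) (h n) x u) * K u from by ring,
        Real.norm_eq_abs, abs_mul, abs_of_nonneg (hKnn u)]
      exact mul_le_mul_of_nonneg_right (hptb u hu) (hKnn u)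
    have hval : (∫ u in closedBall (0 : Fin d → ℝ) 1, M0 * En n * K u) = M0 * En n := by
      rw [MeasureTheory.integral_const_mul, setIntegral_K_eq_one hKsupp hKint, mul_one]
    rw [← hval]
    exact hmono
  have keyJ : ∀ ε : ℝ, 0 < ε → ∀ᶠ n in atTop, ∀ x ∈ Ω,
      |(∫ u in closedBall (0 : Fin d → ℝ) 1,
          (f (x - h n • u) * C (x - h n • u) * Real.Gamma (α (x - h n • u) + 1) /
            (f x * C x * Real.Gamma (α x + 1))) *
          Real.exp (p n * ((g (x - h n • u) - g x) / g x) -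
            Real.log (p n) * (α (x - h n • u) - α x)) * K u) - 1| ≤ ε := by
    intro ε hε
    have hUC := hΩ'comp.uniformContinuousOn_of_continuous (hΦcont.mono hΩ'E)
    rw [Metric.uniformContinuousOn_iff] at hUC
    obtain ⟨δ2, hδ20, hUC2⟩ := hUC (Φ1 * (ε/4) / Real.exp 1) (by positivity)
    have hEv1 : ∀ᶠ n in atTop, h n ≤ δ := hh0.eventually_le_const hδ0
    have hEv1' : ∀ᶠ n in atTop, h n < δ2 := by
      have := hh0.eventually_lt_const hδ20
      simpa using this
    have hEv3' : ∀ᶠ n in atTop, cg / g1 * (p n * h n ^ ηg) ≤ min (1/2) (ε/8) :=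
      hT3.eventually_le_const (lt_min (by norm_num) (by positivity))
    have hEv4' : ∀ᶠ n in atTop, cα * (Real.log (p n) * h n ^ ηα) ≤ min (1/2) (ε/8) :=
      hT4.eventually_le_const (lt_min (by norm_num) (by positivity))
    have hEv2 : ∀ᶠ n in atTop, 1 ≤ p n := hptop.eventually_ge_atTop 1
    filter_upwards [hEv1, hEv1', hEv2, hEv3', hEv4'] with n hn1 hn1' hn2 hn3 hn4
    intro x hxΩ
    have hxΩ' : x ∈ Ω' := hΩΩ' hxΩ
    have hxE : x ∈ E := hΩ'E hxΩ'
    have hfx := hfpos x hxE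
    have hCx := hCpos x hxE
    have hαx0 := hαpos x hxE
    have hgx0 := hgpos x hxE
    have hgxg1 : g1 ≤ g x := hg1le x (hΩΩ' hxΩ)
    have hP0 : 0 < p n := hppos n
    have hlogP0 : 0 ≤ Real.log (p n) := Real.log_nonneg hn2
    have hyΩ' : ∀ u ∈ closedBall (0 : Fin d → ℝ) 1, x - h n • u ∈ Ω' := hymem n hn1 x hxΩ
    have hyE : ∀ u ∈ closedBall (0 : Fin d → ℝ) 1, x - h n • u ∈ E :=
      fun u hu => hΩ'E (hyΩ' u hu)
    obtain ⟨_, hIntF2⟩ := hIntAll n hn1 x hxΩ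
    have hIntK : IntegrableOn K (closedBall (0 : Fin d → ℝ) 1) volume :=
      hKcont.continuousOn.integrableOn_compact (isCompact_closedBall _ _)
    have hJeq : (∫ u in closedBall (0 : Fin d → ℝ) 1,
          (f (x - h n • u) * C (x - h n • u) * Real.Gamma (α (x - h n • u) + 1) /
            (f x * C x * Real.Gamma (α x + 1))) *
          Real.exp (p n * ((g (x - h n • u) - g x) / g x) -
            Real.log (p n) * (α (x - h n • u) - α x)) * K u) =
        ∫ u in closedBall (0 : Fin d → ℝ) 1, F2x d f C g α (p n) (h n) x u * K u := rfl
    rw [hJeq]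
    have heq2 : (∫ u in closedBall (0 : Fin d → ℝ) 1,
        (F2x d f C g α (p n) (h n) x u * K u - K u)) =
        (∫ u in closedBall (0 : Fin d → ℝ) 1, F2x d f C g α (p n) (h n) x u * K u) - 1 := by
      rw [MeasureTheory.integral_sub hIntF2 hIntK, setIntegral_K_eq_one hKsupp hKint]
    rw [← heq2]
    -- pointwise bound on |F2x - 1|
    have hF2near : ∀ u ∈ closedBall (0 : Fin d → ℝ) 1,
        |F2x d f C g α (p n) (h n) x u - 1| ≤ 3/4 * ε := by
      intro u hu
      have hyE' := hyE u hu
      have hyΩ'' := hyΩ' u hu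
      have hΦx0 : 0 < Φ x := hΦpos x hxE
      have hΦx1 : Φ1 ≤ Φ x := hΦ1le x hxΩ'
      have hdistxy : dist (x - h n • u) x < δ2 := by
        rw [dist_eq_norm, show x - h n • u - x = -(x - (x - h n • u)) from by abel, norm_neg]
        exact lt_of_le_of_lt (hnormb n x u hu) hn1'
      have hΦclose : |Φ (x - h n • u) - Φ x| < Φ1 * (ε/4) / Real.exp 1 := by
        have := hUC2 _ (hyΩ' u hu) _ hxΩ' hdistxy
        rwa [Real.dist_eq] at this
      have hQ : |Φ (x - h n • u) / Φ x - 1| ≤ (ε/4) / Real.exp 1 := by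
        have e1 : Φ (x - h n • u) / Φ x - 1 = (Φ (x - h n • u) - Φ x) / Φ x := by
          field_simp
        rw [e1, abs_div, abs_of_pos hΦx0]
        calc |Φ (x - h n • u) - Φ x| / Φ x ≤ (Φ1 * (ε/4) / Real.exp 1) / Φ x := by gcongr
        _ ≤ (Φ1 * (ε/4) / Real.exp 1) / Φ1 := by gcongr
        _ = (ε/4) / Real.exp 1 := by field_simp
      have hgdiff : |g x - g (x - h n • u)| ≤ cg * h n ^ ηg := by
        calc |g x - g (x - h n • u)| ≤ cg * ‖x - (x - h n • u)‖ ^ ηg := hgH x hxE _ hyE'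
        _ ≤ cg * h n ^ ηg := by
            apply mul_le_mul_of_nonneg_left ?_ hcg0.le
            exact Real.rpow_le_rpow (norm_nonneg _) (hnormb n x u hu) hηg.le
      have hαdiff : |α x - α (x - h n • u)| ≤ cα * h n ^ ηα := by
        calc |α x - α (x - h n • u)| ≤ cα * ‖x - (x - h n • u)‖ ^ ηα := hαH x hxE _ hyE'
        _ ≤ cα * h n ^ ηα := by
            apply mul_le_mul_of_nonneg_left ?_ hcα0.le
            exact Real.rpow_le_rpow (norm_nonneg _) (hnormb n x u hu) hηα.le
      have hARG : |p n * ((g (x - h n • u) - g x) / g x) -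
          Real.log (p n) * (α (x - h n • u) - α x)| ≤ min 1 (ε/4) := by
        have e1 : |p n * ((g (x - h n • u) - g x) / g x)| ≤ min (1/2) (ε/8) := by
          rw [abs_mul, abs_of_pos hP0, abs_div, abs_of_pos hgx0]
          have hb : |g (x - h n • u) - g x| / g x ≤ cg / g1 * h n ^ ηg := by
            have hnum2 : |g (x - h n • u) - g x| ≤ cg * h n ^ ηg := by
              rw [abs_sub_comm]; exact hgdiff
            have hcgh : 0 ≤ cg * h n ^ ηg :=
              mul_nonneg hcg0.le (Real.rpow_nonneg (hhpos n).le ηg)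
            calc |g (x - h n • u) - g x| / g x ≤ (cg * h n ^ ηg) / g x := by gcongr
            _ ≤ (cg * h n ^ ηg) / g1 := by gcongr
            _ = cg / g1 * h n ^ ηg := by ring
          calc p n * (|g (x - h n • u) - g x| / g x) ≤ p n * (cg / g1 * h n ^ ηg) :=
                mul_le_mul_of_nonneg_left hb hP0.le
          _ = cg / g1 * (p n * h n ^ ηg) := by ring
          _ ≤ min (1/2) (ε/8) := hn3
        have e2 : |Real.log (p n) * (α (x - h n • u) - α x)| ≤ min (1/2) (ε/8) := by
          rw [abs_mul, abs_of_nonneg hlogP0]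
          have e3 : |α (x - h n • u) - α x| ≤ cα * h n ^ ηα := by
            rw [abs_sub_comm]; exact hαdiff
          calc Real.log (p n) * |α (x - h n • u) - α x| ≤
              Real.log (p n) * (cα * h n ^ ηα) := mul_le_mul_of_nonneg_left e3 hlogP0
          _ = cα * (Real.log (p n) * h n ^ ηα) := by ring
          _ ≤ min (1/2) (ε/8) := hn4
        have htri := abs_sub_le' (p n * ((g (x - h n • u) - g x) / g x))
          (Real.log (p n) * (α (x - h n • u) - α x))
        refine le_min ?_ ?_
        · have := min_le_left (1/2 : ℝ) (ε/8)
          linarith [e1, e2, htri, min_le_left (1/2 : ℝ) (ε/8)]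
        · linarith [e1, e2, htri, min_le_right (1/2 : ℝ) (ε/8)]
      have hmain := mul_exp_near_one (Q := Φ (x - h n • u) / Φ x)
        (q := (ε/4) / Real.exp 1)
        (rr := min 1 (ε/4)) hQ hARG (min_le_left _ _)
      have hF2form : F2x d f C g α (p n) (h n) x u = Φ (x - h n • u) / Φ x *
          Real.exp (p n * ((g (x - h n • u) - g x) / g x) -
            Real.log (p n) * (α (x - h n • u) - α x)) := rfl
      rw [hF2form]
      calc |Φ (x - h n • u) / Φ x * Real.exp (p n * ((g (x - h n • u) - g x) / g x) -
            Real.log (p n) * (α (x - h n • u) - α x)) - 1| ≤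
          (ε/4) / Real.exp 1 * Real.exp 1 + 2 * min 1 (ε/4) := hmain
      _ ≤ ε/4 + 2 * (ε/4) := by
          have hexp1 : (ε/4) / Real.exp 1 * Real.exp 1 = ε/4 := by
            field_simp
          rw [hexp1]
          have := min_le_right (1:ℝ) (ε/4)
          linarith
      _ = 3/4 * ε := by ring
    rw [← Real.norm_eq_abs]
    refine (norm_integral_le_integral_norm _).trans ?_
    have hIntBnd : IntegrableOn (fun u => 3/4 * ε * K u)
        (closedBall (0 : Fin d → ℝ) 1) volume :=
      ((continuous_const.mul hKcont).continuousOn).integrableOn_compact (isCompact_closedBall _ _)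
    have hmono : (∫ u in closedBall (0 : Fin d → ℝ) 1,
        ‖F2x d f C g α (p n) (h n) x u * K u - K u‖) ≤
        ∫ u in closedBall (0 : Fin d → ℝ) 1, 3/4 * ε * K u := by
      refine setIntegral_mono_on ((hIntF2.sub hIntK).norm) hIntBnd measurableSet_closedBall ?_
      intro u hu
      rw [show F2x d f C g α (p n) (h n) x u * K u - K u =
        (F2x d f C g α (p n) (h n) x u - 1) * K u from by ring,
        Real.norm_eq_abs, abs_mul, abs_of_nonneg (hKnn u)]
      exact mul_le_mul_of_nonneg_right (hF2near u hu) (hKnn u)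
    have hval : (∫ u in closedBall (0 : Fin d → ℝ) 1, 3/4 * ε * K u) = 3/4 * ε := by
      rw [MeasureTheory.integral_const_mul, setIntegral_K_eq_one hKsupp hKint, mul_one]
    calc (∫ u in closedBall (0 : Fin d → ℝ) 1,
        ‖F2x d f C g α (p n) (h n) x u * K u - K u‖) ≤
        ∫ u in closedBall (0 : Fin d → ℝ) 1, 3/4 * ε * K u := hmono
    _ = 3/4 * ε := hval
    _ ≤ ε := by linarith
  constructor
  · rw [Metric.tendsto_atTop]
    intro ε hε
    have hev : ∀ᶠ n in atTop, dist (⨆ x : Ω,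
        |Mn d f C g α K (h n) (p n) (x : Fin d → ℝ) /
            (f (x : Fin d → ℝ) * C (x : Fin d → ℝ) * g (x : Fin d → ℝ) ^ p n) /
          (α (x : Fin d → ℝ) * betaFn (p n + 1) (α (x : Fin d → ℝ))) - 1|) 0 < ε := by
      have hc : ∀ᶠ n in atTop, M0 * En n < ε / 4 := by
        have : Tendsto (fun n => M0 * En n) atTop (nhds 0) := by
          simpa using hEn0.const_mul M0
        exact this.eventually_lt_const (by linarith)
      filter_upwards [keyA, keyJ (ε/4) (by linarith), hc] with n hA hJ hc
      have hsup : (⨆ x : Ω,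
          |Mn d f C g α K (h n) (p n) (x : Fin d → ℝ) /
              (f (x : Fin d → ℝ) * C (x : Fin d → ℝ) * g (x : Fin d → ℝ) ^ p n) /
            (α (x : Fin d → ℝ) * betaFn (p n + 1) (α (x : Fin d → ℝ))) - 1|) ≤ ε / 2 := by
        refine Real.iSup_le (fun x => ?_) (by linarith)
        have h1 := hA x.1 x.2
        have h2 := hJ x.1 x.2
        have tri : ∀ a b : ℝ, |a - 1| ≤ |a - b| + |b - 1| := fun a b => by
          have : a - 1 = (a - b) + (b - 1) := by ring
          rw [this]; exact abs_add_le _ _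
        exact le_trans (tri _ _) (le_trans (add_le_add h1 h2) (by linarith))
      have hsup0 : (0:ℝ) ≤ ⨆ x : Ω,
          |Mn d f C g α K (h n) (p n) (x : Fin d → ℝ) /
              (f (x : Fin d → ℝ) * C (x : Fin d → ℝ) * g (x : Fin d → ℝ) ^ p n) /
            (α (x : Fin d → ℝ) * betaFn (p n + 1) (α (x : Fin d → ℝ))) - 1| :=
        Real.iSup_nonneg (fun x => abs_nonneg _)
      rw [Real.dist_eq, sub_zero, abs_of_nonneg hsup0]
      linarith
    exact eventually_atTop.mp hev
  · refine ⟨M0, ?_⟩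
    filter_upwards [keyA] with n hA
    refine Real.iSup_le (fun x => hA x.1 x.2) ?_
    have := hEnpos n
    positivity
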